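/- With g as Nesterov's worst-case function on ℓ² with parameters μ < L and minimizer x⋆ = (q, q², ...), q = (√κ−1)/(√κ+1), κ = L/μ: for any point x^k whose coordinates vanish beyond index k, one has ‖x^k − x⋆‖² ≥ q^{2k}‖x⁰ − x⋆‖² and g(x^k) − g(x⋆) ≥ (μ/2)·q^{2k}‖x⁰ − x⋆‖², where x⁰ = 0. -/

import Mathlib

open RealInnerProductSpace

noncomputable abbrev ll2 := lp (fun _ : ℕ => ℝ) 2

lemma aux_inner_tsum (x y : ll2) : ⟪x, y⟫ = ∑' j, x j * y j := by
  rw [lp.inner_eq_tsum]; simp [RCLike.inner_apply, mul_comm]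

lemma aux_summ_mul (x y : ll2) : Summable (fun j => x j * y j) := by
  have := lp.summable_inner (𝕜 := ℝ) x y
  simpa [RCLike.inner_apply, mul_comm] using this

lemma aux_norm_sq (x : ll2) : ‖x‖ ^ 2 = ∑' j, (x j) ^ 2 := by
  rw [← real_inner_self_eq_norm_sq, aux_inner_tsum]; simp [sq]

lemma aux_summ_sq (x : ll2) : Summable (fun j => (x j) ^ 2) := by
  simpa [sq] using aux_summ_mul x x

lemma aux_summ_shift (x y : ll2) : Summable (fun j => x (j + 1) * y j) := by
  have hx : Summable (fun j => (x (j + 1)) ^ 2) :=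
    (summable_nat_add_iff 1).mpr (aux_summ_sq x)
  have habs : Summable (fun j => |x (j + 1) * y j|) := by
    refine Summable.of_nonneg_of_le (fun j => abs_nonneg _)
      (fun j => ?_) ((hx.add (aux_summ_sq y)).mul_left (1/2))
    rw [abs_mul]; have h := two_mul_le_add_sq |x (j+1)| |y j|
    nlinarith [abs_nonneg (x (j+1)), abs_nonneg (y j), sq_abs (x (j+1)), sq_abs (y j)]
  exact habs.of_abs

lemma aux_inner_A (A : ll2 →L[ℝ] ll2)
    (hA0 : ∀ x : ll2, A x 0 = 2 * x 0 - x 1)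
    (hA : ∀ x : ll2, ∀ j : ℕ, 1 ≤ j → A x j = -x (j - 1) + 2 * x j - x (j + 1))
    (x y : ll2) :
    ⟪x, A y⟫ = 2 * (∑' j, x j * y j) - (∑' j, x j * y (j + 1))
      - (∑' j, x (j + 1) * y j) := by
  have hpt : ∀ j, x j * (A y) j
      = (2 * (x j * y j) - x j * y (j + 1))
        - (fun m => if m = 0 then 0 else x m * y (m - 1)) j := by
    intro j
    match j with
    | 0 => simp [hA0 y]; ring
    | (n + 1) => simp [hA y (n + 1) (by omega)]; ring
  have hsummh : Summable (fun m => if m = 0 then 0 else x m * y (m - 1)) := by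
    apply (summable_nat_add_iff 1).mp
    simpa using aux_summ_shift x y
  have hsum1 : Summable (fun j => 2 * (x j * y j) - x j * y (j + 1)) := by
    have h1 := (aux_summ_mul x y).mul_left 2
    have h2 : Summable (fun j => x j * y (j + 1)) := by
      have := aux_summ_shift y x
      simpa [mul_comm] using this
    exact h1.sub h2
  calc ⟪x, A y⟫ = ∑' j, x j * (A y) j := aux_inner_tsum x (A y)
    _ = ∑' j, ((2 * (x j * y j) - x j * y (j + 1))
        - (fun m => if m = 0 then 0 else x m * y (m - 1)) j) := by
        exact tsum_congr hpt
    _ = (∑' j, (2 * (x j * y j) - x j * y (j + 1)))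
        - ∑' m, (fun m => if m = 0 then 0 else x m * y (m - 1)) m :=
        Summable.tsum_sub hsum1 hsummh
    _ = 2 * (∑' j, x j * y j) - (∑' j, x j * y (j + 1))
      - (∑' j, x (j + 1) * y j) := by
        rw [Summable.tsum_sub ((aux_summ_mul x y).mul_left 2)
          (by { have := aux_summ_shift y x; simpa [mul_comm] using this }),
          tsum_mul_left, Summable.tsum_eq_zero_add hsummh]
        simp

lemma aux_symm (A : ll2 →L[ℝ] ll2)
    (hA0 : ∀ x : ll2, A x 0 = 2 * x 0 - x 1)
    (hA : ∀ x : ll2, ∀ j : ℕ, 1 ≤ j → A x j = -x (j - 1) + 2 * x j - x (j + 1))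
    (x y : ll2) : ⟪x, A y⟫ = ⟪y, A x⟫ := by
  rw [aux_inner_A A hA0 hA x y, aux_inner_A A hA0 hA y x]
  simp_rw [mul_comm (x _) (y _)]
  ring

lemma aux_pos (A : ll2 →L[ℝ] ll2)
    (hA0 : ∀ x : ll2, A x 0 = 2 * x 0 - x 1)
    (hA : ∀ x : ll2, ∀ j : ℕ, 1 ≤ j → A x j = -x (j - 1) + 2 * x j - x (j + 1))
    (d : ll2) : 0 ≤ ⟪d, A d⟫ := by
  rw [aux_inner_A A hA0 hA d d]
  have he : (∑' j, d j * d (j + 1)) = ∑' j, d (j + 1) * d j := by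
    simp_rw [mul_comm]
  rw [he]
  have h1 : (∑' j, (d (j + 1)) ^ 2) ≤ ∑' j, (d j) ^ 2 := by
    refine Summable.tsum_le_tsum_of_inj (· + 1) (add_left_injective 1)
      (fun c _ => sq_nonneg _) (fun i => le_rfl)
      ((summable_nat_add_iff 1).mpr (aux_summ_sq d)) (aux_summ_sq d)
  have h2 : 2 * (∑' j, d (j + 1) * d j) ≤ (∑' j, (d (j+1)) ^ 2) + ∑' j, (d j) ^ 2 := by
    rw [← tsum_mul_left, ← Summable.tsum_add ((summable_nat_add_iff 1).mpr (aux_summ_sq d)) (aux_summ_sq d)]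
    refine Summable.tsum_le_tsum (fun j => by have := two_mul_le_add_sq (d (j+1)) (d j); linarith)
      ((aux_summ_shift d d).mul_left 2)
      (((summable_nat_add_iff 1).mpr (aux_summ_sq d)).add (aux_summ_sq d))
  have h3 : (∑' j, d j * d j) = ∑' j, (d j) ^ 2 := by simp_rw [sq]
  rw [h3]
  linarith

lemma aux_key (μ L : ℝ) (hμ : 0 < μ) (hL : μ < L)
    (q : ℝ) (hq : q = (Real.sqrt (L / μ) - 1) / (Real.sqrt (L / μ) + 1)) :
    (L - μ) * (1 - q) ^ 2 = 4 * μ * q := by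
  have hL0 : 0 < L := hμ.trans hL
  set s := Real.sqrt (L / μ) with hs
  have hs0 : 0 < s := Real.sqrt_pos.mpr (by positivity)
  have hs2 : s ^ 2 = L / μ := Real.sq_sqrt (by positivity)
  have hL' : L = μ * s ^ 2 := by field_simp at hs2; linarith [hs2]
  have hs1 : s + 1 ≠ 0 := by positivity
  rw [hq, hL']
  field_simp
  ring

lemma aux_Axs (μ L : ℝ) (hμ : 0 < μ) (hL : μ < L)
    (A : ll2 →L[ℝ] ll2)
    (hA0 : ∀ x : ll2, A x 0 = 2 * x 0 - x 1)
    (hA : ∀ x : ll2, ∀ j : ℕ, 1 ≤ j → A x j = -x (j - 1) + 2 * x j - x (j + 1))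
    (q : ℝ) (hq : q = (Real.sqrt (L / μ) - 1) / (Real.sqrt (L / μ) + 1))
    (xs : ll2) (hxs : ∀ j : ℕ, xs j = q ^ (j + 1)) :
    ∀ j, A xs j = (if j = 0 then 1 else 0) - (4 * μ / (L - μ)) * xs j := by
  have hLμ : L - μ ≠ 0 := by linarith
  have hk := aux_key μ L hμ hL q hq
  have hc : 4 * μ / (L - μ) * q = 1 - 2 * q + q ^ 2 := by
    field_simp
    nlinarith [hk]
  intro j
  match j with
  | 0 =>
    rw [hA0 xs, hxs 0, hxs 1]
    norm_num
    linarith [hc]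
  | (n + 1) =>
    rw [hA xs (n + 1) (by omega), hxs, hxs, hxs]
    simp only [Nat.add_sub_cancel, if_neg (Nat.succ_ne_zero n)]
    have : 4 * μ / (L - μ) * q ^ (n + 1 + 1) = (4 * μ / (L - μ) * q) * q ^ (n + 1) := by ring
    rw [this, hc]
    ring

lemma aux_inner_Axs (μ L : ℝ) (hμ : 0 < μ) (hL : μ < L)
    (A : ll2 →L[ℝ] ll2)
    (hA0 : ∀ x : ll2, A x 0 = 2 * x 0 - x 1)
    (hA : ∀ x : ll2, ∀ j : ℕ, 1 ≤ j → A x j = -x (j - 1) + 2 * x j - x (j + 1))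
    (q : ℝ) (hq : q = (Real.sqrt (L / μ) - 1) / (Real.sqrt (L / μ) + 1))
    (xs : ll2) (hxs : ∀ j : ℕ, xs j = q ^ (j + 1)) (z : ll2) :
    ⟪z, A xs⟫ = z 0 - (4 * μ / (L - μ)) * ⟪z, xs⟫ := by
  have hco := aux_Axs μ L hμ hL A hA0 hA q hq xs hxs
  rw [aux_inner_tsum, aux_inner_tsum]
  have hpt : ∀ j, z j * (A xs) j
      = (if j = 0 then z 0 else 0) - (4 * μ / (L - μ)) * (z j * xs j) := by
    intro j
    rw [hco j]
    by_cases h : j = 0 <;> simp [h] <;> ring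
  rw [tsum_congr hpt, Summable.tsum_sub ?_ ((aux_summ_mul z xs).mul_left _), tsum_ite_eq, tsum_mul_left]
  exact summable_of_ne_finset_zero (s := {0}) (by intro b hb; simp at hb; simp [hb])

/-- Nesterov's lower-bound estimate: for `g` the worst-case function on `ℓ²` with
parameters `0 < μ < L`, minimizer `x⋆` with coordinates `q, q², …`
(`q = (√κ−1)/(√κ+1)`, `κ = L/μ`), and any point `x^k` whose coordinates vanish beyond
index `k`, one has `‖x^k − x⋆‖² ≥ q^{2k}‖x⁰ − x⋆‖²` and
`g(x^k) − g(x⋆) ≥ (μ/2) q^{2k} ‖x⁰ − x⋆‖²`, where `x⁰ = 0`. -/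
theorem stmt_11 (μ L : ℝ) (hμ : 0 < μ) (hL : μ < L)
    (A : lp (fun _ : ℕ => ℝ) 2 →L[ℝ] lp (fun _ : ℕ => ℝ) 2)
    (hA0 : ∀ x, A x 0 = 2 * x 0 - x 1)
    (hA : ∀ x, ∀ j : ℕ, 1 ≤ j → A x j = -x (j - 1) + 2 * x j - x (j + 1))
    (g : lp (fun _ : ℕ => ℝ) 2 → ℝ)
    (hg : ∀ x, g x = (L - μ) / 8 * (⟪x, A x⟫ - 2 * x 0) + μ / 2 * ‖x‖ ^ 2)
    (q : ℝ) (hq : q = (Real.sqrt (L / μ) - 1) / (Real.sqrt (L / μ) + 1))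
    (xs : lp (fun _ : ℕ => ℝ) 2) (hxs : ∀ j : ℕ, xs j = q ^ (j + 1))
    (k : ℕ) (xk : lp (fun _ : ℕ => ℝ) 2) (hxk : ∀ j : ℕ, k ≤ j → xk j = 0) :
    ‖xk - xs‖ ^ 2 ≥ q ^ (2 * k) * ‖(0 : lp (fun _ : ℕ => ℝ) 2) - xs‖ ^ 2 ∧
    g xk - g xs ≥ μ / 2 * q ^ (2 * k) * ‖(0 : lp (fun _ : ℕ => ℝ) 2) - xs‖ ^ 2 := by
  have hLμ : L - μ ≠ 0 := by linarith
  have hcoe : ∀ j, (xk - xs) j = xk j - xs j := fun j => by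
    simp [lp.coeFn_sub]
  have h0 : ‖(0 : ll2) - xs‖ ^ 2 = ∑' j, (xs j) ^ 2 := by
    rw [zero_sub, norm_neg, aux_norm_sq]
  have hsummd : Summable (fun j => (xk j - xs j) ^ 2) :=
    (aux_summ_sq (xk - xs)).congr fun j => by rw [hcoe]
  have hnk : ‖xk - xs‖ ^ 2 = ∑' j, (xk j - xs j) ^ 2 := by
    rw [aux_norm_sq]; exact tsum_congr fun j => by rw [hcoe]
  have part1 : ‖xk - xs‖ ^ 2 ≥ q ^ (2 * k) * ‖(0 : ll2) - xs‖ ^ 2 := by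
    rw [h0, hnk, ← tsum_mul_left]
    refine Summable.tsum_le_tsum_of_inj (· + k) (add_left_injective k)
      (fun c _ => sq_nonneg _) (fun j => ?_)
      ((aux_summ_sq xs).mul_left _) hsummd
    rw [hxk (j + k) (by omega), hxs]
    apply le_of_eq
    rw [hxs]
    ring
  refine ⟨part1, ?_⟩
  have e1 := aux_inner_Axs μ L hμ hL A hA0 hA q hq xs hxs xk
  have e2 := aux_inner_Axs μ L hμ hL A hA0 hA q hq xs hxs xs
  have e3 := aux_symm A hA0 hA xs xk
  have e4 : ⟪xk - xs, A (xk - xs)⟫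
      = ⟪xk, A xk⟫ - ⟪xk, A xs⟫ - ⟪xs, A xk⟫ + ⟪xs, A xs⟫ := by
    rw [map_sub, inner_sub_left, inner_sub_right, inner_sub_right]
    ring
  have e5 : ‖xk - xs‖ ^ 2 = ‖xk‖ ^ 2 - 2 * ⟪xk, xs⟫ + ‖xs‖ ^ 2 :=
    norm_sub_sq_real xk xs
  have e6 : ⟪xs, xs⟫ = ‖xs‖ ^ 2 := real_inner_self_eq_norm_sq xs
  have main : g xk - g xs
      = (L - μ) / 8 * ⟪xk - xs, A (xk - xs)⟫ + μ / 2 * ‖xk - xs‖ ^ 2 := by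
    rw [hg, hg, e4, e3, e1, e2, e5, e6]
    field_simp
    ring
  have hpos := aux_pos A hA0 hA (xk - xs)
  have hc8 : 0 ≤ (L - μ) / 8 * ⟪xk - xs, A (xk - xs)⟫ :=
    mul_nonneg (by linarith) hpos
  have hmul := mul_le_mul_of_nonneg_left part1 (by positivity : (0:ℝ) ≤ μ / 2)
  rw [main]
  calc μ / 2 * q ^ (2 * k) * ‖(0 : ll2) - xs‖ ^ 2
      = μ / 2 * (q ^ (2 * k) * ‖(0 : ll2) - xs‖ ^ 2) := by ring
    _ ≤ μ / 2 * ‖xk - xs‖ ^ 2 := hmul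
    _ ≤ _ := by linarith
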